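/- Let N, k be positive integers and ω = e^{2πi/N}. Let Π_1, Π_2, Π_1', Π_2' be partitions of {1,…,2k} with Π_1' ≤ Π_1 and Π_2' ≤ Π_2 in the refinement order. Then √(|E_{Π_1}|·|E_{Π_2}|) · ⟨E_{Π_1}| F^{⊗k,k} |E_{Π_2}⟩ ≤ √(|E_{Π_1'}|·|E_{Π_2'}|) · ⟨E_{Π_1'}| F^{⊗k,k} |E_{Π_2'}⟩; equivalently, Σ_{m∈E_{Π_1}, n∈E_{Π_2}} ω^{m·n} ≤ Σ_{m∈E_{Π_1'}, n∈E_{Π_2'}} ω^{m·n} (both sums being positive reals), where m·n = Σ_{j=1}^k m_j n_j − Σ_{j=k+1}^{2k} m_j n_j. -/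

import Mathlib

open scoped BigOperators Classical

/-- The number of blocks `|Π|` of the partition corresponding to `r`. -/
noncomputable def numBlocks {n : ℕ} (r : Setoid (Fin n)) : ℕ :=
  Nat.card (Quotient r)

/-- The Fourier transform `F = N^{-1/2} ∑_{m,n=1}^N ω^{mn} |m⟩⟨n|`, `ω = e^{2πi/N}`. -/
noncomputable def Fmat (N : ℕ) : Matrix (Fin N) (Fin N) ℂ :=
  fun i j => (Real.sqrt N : ℂ)⁻¹ *
    Complex.exp (2 * Real.pi * Complex.I * (((i : ℕ) + 1) * ((j : ℕ) + 1)) / N)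

/-- `F^{⊗k,k} = F^{⊗k} ⊗ (conj F)^{⊗k}` as a matrix on `(ℂ^N)^{⊗2k}`. -/
noncomputable def Fkk (N k : ℕ) : Matrix (Fin (2*k) → Fin N) (Fin (2*k) → Fin N) ℂ :=
  fun a b => ∏ j : Fin (2*k),
    if (j : ℕ) < k then Fmat N (a j) (b j) else (starRingEnd ℂ) (Fmat N (a j) (b j))

/-- The set `E_Π` of tuples whose coordinates are equal on each block of `r`. -/
def Eset (N n : ℕ) (r : Setoid (Fin n)) : Set (Fin n → Fin N) :=
  {v | ∀ i j : Fin n, r i j → v i = v j}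

/-- The unit vector `|E_Π⟩ = |E_Π|^{-1/2} ∑_{n ∈ E_Π} |n⟩`, where `|E_Π| = N^{|Π|}`. -/
noncomputable def ketE (N n : ℕ) (r : Setoid (Fin n)) : (Fin n → Fin N) → ℂ :=
  fun v => if v ∈ Eset N n r then ((Real.sqrt ((N : ℝ) ^ numBlocks r) : ℂ))⁻¹ else 0

/-- The matrix element `⟨E_{Π₁}| F^{⊗k,k} |E_{Π₂}⟩`. -/
noncomputable def matEltE (N k : ℕ) (r₁ r₂ : Setoid (Fin (2*k))) : ℂ :=
  ∑ a : Fin (2*k) → Fin N, ∑ b : Fin (2*k) → Fin N,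
    (starRingEnd ℂ) (ketE N (2*k) r₁ a) * Fkk N k a b * ketE N (2*k) r₂ b

/-- The pairing `m·n = ∑_{j≤k} m_j n_j - ∑_{j>k} m_j n_j`, with coordinates of
`Fin N` read as the values `1,…,N`. -/
def dotp (N k : ℕ) (m n : Fin (2*k) → Fin N) : ℤ :=
  ∑ j : Fin (2*k),
    (if (j : ℕ) < k then 1 else -1) * (((m j : ℕ) + 1) : ℤ) * (((n j : ℕ) + 1) : ℤ)

/-- The exponential sum `∑_{m ∈ E_{Π₁}} ∑_{n ∈ E_{Π₂}} ω^{m·n}`, `ω = e^{2πi/N}`. -/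
noncomputable def expSum (N k : ℕ) (r₁ r₂ : Setoid (Fin (2*k))) : ℂ :=
  ∑ m ∈ Finset.univ.filter (· ∈ Eset N (2*k) r₁),
    ∑ n ∈ Finset.univ.filter (· ∈ Eset N (2*k) r₂),
      Complex.exp (2 * Real.pi * Complex.I / N) ^ (dotp N k m n)

/- For setoids viewed as partitions, `≤` is the refinement order.  All the matrix
elements `⟨E_Π|F^{⊗k,k}|E_Π'⟩` below are real, so the inequalities are stated for
their real parts. -/
noncomputable def w (N : ℕ) : ℂ := Complex.exp (2 * Real.pi * Complex.I / N)

lemma w_ne_zero (N : ℕ) : w N ≠ 0 := Complex.exp_ne_zero _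

lemma w_pow_nat (N n : ℕ) : w N ^ n = Complex.exp (2 * Real.pi * Complex.I * n / N) := by
  rw [w, ← Complex.exp_nat_mul]; ring_nf

section basic
variable (N : ℕ) [NeZero N]

lemma w_pow_N : w N ^ N = 1 := by
  rw [w_pow_nat, mul_div_assoc, div_self (by exact_mod_cast (NeZero.ne N) : (N:ℂ) ≠ 0), mul_one]
  simpa using Complex.exp_int_mul_two_pi_mul_I 1

noncomputable def ee (x : ZMod N) : ℂ := w N ^ x.val

lemma ee_zero : ee N 0 = 1 := by simp [ee, ZMod.val_zero]

lemma w_pow_mod (a : ℕ) : w N ^ (a % N) = w N ^ a := by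
  conv_rhs => rw [← Nat.mod_add_div a N]
  rw [pow_add, pow_mul, w_pow_N N, one_pow, mul_one]

lemma ee_add (x y : ZMod N) : ee N (x + y) = ee N x * ee N y := by
  rw [ee, ee, ee, ZMod.val_add, w_pow_mod N, pow_add]

lemma ee_sum {ι : Type*} (s : Finset ι) (f : ι → ZMod N) :
    ee N (∑ i ∈ s, f i) = ∏ i ∈ s, ee N (f i) := by
  classical
  induction s using Finset.induction_on with
  | empty => simp [ee_zero]
  | insert _ _ h ih => rw [Finset.sum_insert h, Finset.prod_insert h, ee_add N, ih]

lemma w_zpow (z : ℤ) : w N ^ z = ee N (z : ZMod N) := by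
  have h1 : ((((z : ZMod N)).val : ℤ)) = z % N := ZMod.val_intCast z
  have h2 : z = N * (z / N) + ((z : ZMod N).val : ℤ) := by
    rw [h1]; exact (Int.mul_ediv_add_emod z N).symm
  rw [ee, ← zpow_natCast (w N)]
  conv_lhs => rw [h2]
  rw [zpow_add₀ (w_ne_zero N), zpow_mul, zpow_natCast, w_pow_N N, one_zpow, one_mul]

lemma ee_ne_one {a : ZMod N} (ha : a ≠ 0) : ee N a ≠ 1 := by
  rw [ee, w_pow_nat]
  intro h
  rw [Complex.exp_eq_one_iff] at h
  obtain ⟨n, hn⟩ := h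
  have hval : 0 < a.val := Nat.pos_of_ne_zero (fun h0 => ha (by
    have := ZMod.val_cast_of_lt (NeZero.pos N)
    calc a = ((a.val : ℕ) : ZMod N) := by rw [ZMod.natCast_val, ZMod.cast_id]
    _ = 0 := by rw [h0]; simp))
  have hlt : a.val < N := ZMod.val_lt a
  -- hn : 2 * π * I * a.val / N = n * (2 * π * I)
  have hNc : (N : ℂ) ≠ 0 := by exact_mod_cast (NeZero.ne N)
  have h2 : (2:ℂ) * Real.pi * Complex.I ≠ 0 := by
    simp [Complex.I_ne_zero, Real.pi_ne_zero, Complex.ext_iff]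
  rw [mul_div_assoc] at hn
  have h4 : ((a.val:ℂ)/N) = n := mul_left_cancel₀ h2 (hn.trans (mul_comm _ _))
  have h5 : (a.val : ℂ) = n * N := by rw [div_eq_iff hNc] at h4; exact h4
  have h6 : (a.val : ℤ) = n * N := by exact_mod_cast h5
  have hlt2 : (a.val : ℤ) < N := by exact_mod_cast hlt
  have hpos : (0:ℤ) < a.val := by exact_mod_cast hval
  rcases le_or_gt n 0 with hn0 | hn0
  · nlinarith [Int.natCast_pos.mpr (NeZero.pos N)]
  · nlinarith [Int.natCast_pos.mpr (NeZero.pos N)]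

lemma sum_ee (a : ZMod N) :
    (∑ y : ZMod N, ee N (a * y)) = if a = 0 then (N : ℂ) else 0 := by
  split_ifs with h
  · simp [h, ee_zero, Finset.card_univ, ZMod.card]
  · have key : ee N a * (∑ y : ZMod N, ee N (a * y)) = ∑ y : ZMod N, ee N (a * y) := by
      rw [Finset.mul_sum]
      refine Fintype.sum_equiv (Equiv.addRight 1) _ _ (fun y => ?_)
      rw [← ee_add N, Equiv.coe_addRight, mul_add, mul_one, add_comm]
    have h7 : (ee N a - 1) * (∑ y : ZMod N, ee N (a * y)) = 0 := by
      rw [sub_mul, one_mul, key, sub_self]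
    rcases mul_eq_zero.mp h7 with h' | h'
    · exact absurd (sub_eq_zero.mp h') (ee_ne_one N h)
    · exact h'

end basic

section part
variable (N : ℕ) [NeZero N] {n : ℕ}


noncomputable def zToFin (x : ZMod N) : Fin N := ⟨x.val, ZMod.val_lt x⟩

lemma zToFin_cast (x : ZMod N) : (((zToFin N x : ℕ)) : ZMod N) = x := by
  simp only [zToFin]
  rw [ZMod.natCast_val, ZMod.cast_id]

noncomputable def toE (r : Setoid (Fin n)) (g : Quotient r → ZMod N) : Fin n → Fin N :=
  fun j => zToFin N (g (Quotient.mk r j) - 1)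

lemma toE_cast (r : Setoid (Fin n)) (g : Quotient r → ZMod N) (j : Fin n) :
    ((toE N r g j : ℕ) + 1 : ZMod N) = g (Quotient.mk r j) := by
  show (((toE N r g j : ℕ) : ZMod N) + 1 : ZMod N) = _
  rw [toE, zToFin_cast, sub_add_cancel]

lemma toE_mem (r : Setoid (Fin n)) (g : Quotient r → ZMod N) : toE N r g ∈ Eset N n r := by
  intro i j hij
  have h : (Quotient.mk r i) = Quotient.mk r j := Quotient.sound hij
  simp [toE, h]

lemma sum_Eset (r : Setoid (Fin n)) {M : Type*} [AddCommMonoid M] (F : (Fin n → Fin N) → M) :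
    ∑ m ∈ Finset.univ.filter (· ∈ Eset N n r), F m = ∑ g : Quotient r → ZMod N, F (toE N r g) := by
  classical
  refine Finset.sum_nbij' (i := fun m (c : Quotient r) => (((m c.out : ℕ) + 1 : ℕ) : ZMod N))
    (j := toE N r) (fun a _ => Finset.mem_univ _)
    (fun g _ => Finset.mem_filter.mpr ⟨Finset.mem_univ _, toE_mem N r g⟩) ?_ ?_ ?_
  · intro m hm
    have hmE : m ∈ Eset N n r := (Finset.mem_filter.mp hm).2
    funext j
    have h1 : ((((m (Quotient.mk r j).out : ℕ) + 1 : ℕ) : ZMod N) - 1) =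
        (((m (Quotient.mk r j).out : ℕ) : ℕ) : ZMod N) := by push_cast; ring
    have h2 : m (Quotient.mk r j).out = m j := hmE _ _ (Quotient.mk_out j)
    show zToFin N _ = m j
    rw [h1, h2]
    apply Fin.ext
    show (((m j : ℕ) : ZMod N)).val = (m j : ℕ)
    exact ZMod.val_cast_of_lt (m j).isLt
  · intro g _
    funext c
    show ((toE N r g c.out : ℕ) + 1 : ℕ) = g c
    push_cast
    rw [toE_cast, Quotient.out_eq]
  · intro m hm
    have hmE : m ∈ Eset N n r := (Finset.mem_filter.mp hm).2
    congr 1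
    funext j
    have h1 : ((((m (Quotient.mk r j).out : ℕ) + 1 : ℕ) : ZMod N) - 1) =
        (((m (Quotient.mk r j).out : ℕ) : ℕ) : ZMod N) := by push_cast; ring
    have h2 : m (Quotient.mk r j).out = m j := hmE _ _ (Quotient.mk_out j)
    show m j = zToFin N _
    rw [h1, h2]
    apply Fin.ext
    exact (ZMod.val_cast_of_lt (m j).isLt).symm

end part

section homs
variable (N : ℕ) [NeZero N] {n : ℕ}

def epsz (k : ℕ) (j : Fin (2*k)) : ℤ := if (j : ℕ) < k then 1 else -1

/-- The linear map whose kernel counts the exponential sum. -/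
noncomputable def psi (k : ℕ) (r₁ r₂ : Setoid (Fin (2*k))) :
    (Quotient r₁ → ZMod N) →+ (Quotient r₂ → ZMod N) where
  toFun x c := ∑ j : Fin (2*k),
    if Quotient.mk r₂ j = c then (epsz k j : ZMod N) * x (Quotient.mk r₁ j) else 0
  map_zero' := by funext c; simp
  map_add' x y := by
    funext c
    simp only [Pi.add_apply]
    rw [← Finset.sum_add_distrib]
    refine Finset.sum_congr rfl (fun j _ => ?_)
    by_cases h : Quotient.mk r₂ j = c <;> simp [h, mul_add]

/-- The "merge blocks" surjection on quotients from a refinement. -/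
noncomputable def pim {r' r : Setoid (Fin n)} (h : r' ≤ r) : Quotient r' → Quotient r :=
  Quotient.map' id (fun a b hab => h hab)

lemma pim_mk {r' r : Setoid (Fin n)} (h : r' ≤ r) (j : Fin n) :
    pim h (Quotient.mk r' j) = Quotient.mk r j := rfl

lemma pim_surj {r' r : Setoid (Fin n)} (h : r' ≤ r) : Function.Surjective (pim h) := by
  intro c
  obtain ⟨j, rfl⟩ := Quotient.exists_rep c
  exact ⟨Quotient.mk r' j, rfl⟩

/-- Summing over merged blocks. -/
noncomputable def Pm {r' r : Setoid (Fin n)} (h : r' ≤ r) :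
    (Quotient r' → ZMod N) →+ (Quotient r → ZMod N) where
  toFun f c := ∑ c' : Quotient r', if pim h c' = c then f c' else 0
  map_zero' := by funext c; simp
  map_add' x y := by
    funext c
    simp only [Pi.add_apply]
    rw [← Finset.sum_add_distrib]
    refine Finset.sum_congr rfl (fun c' _ => ?_)
    by_cases hc : pim h c' = c <;> simp [hc]

lemma Pm_comp_psi (k : ℕ) (r₁ : Setoid (Fin (2*k))) {r₂' r₂ : Setoid (Fin (2*k))}
    (h : r₂' ≤ r₂) (x : Quotient r₁ → ZMod N) :
    Pm N h (psi N k r₁ r₂' x) = psi N k r₁ r₂ x := by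
  funext c
  show (∑ c' : Quotient r₂', if pim h c' = c then
      ∑ j : Fin (2*k), if Quotient.mk r₂' j = c' then (epsz k j : ZMod N) * x (Quotient.mk r₁ j) else 0
    else 0) = _
  have key : ∀ c' : Quotient r₂', (if pim h c' = c then
      (∑ j : Fin (2*k), if Quotient.mk r₂' j = c' then (epsz k j : ZMod N) * x (Quotient.mk r₁ j) else 0) else 0)
      = ∑ j : Fin (2*k), if (Quotient.mk r₂' j = c' ∧ pim h c' = c)
          then (epsz k j : ZMod N) * x (Quotient.mk r₁ j) else 0 := by
    intro c'
    split_ifs with hc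
    · exact Finset.sum_congr rfl fun j _ => by simp [hc]
    · exact (Finset.sum_eq_zero fun j _ => by simp [hc]).symm
  rw [Finset.sum_congr rfl (fun c' _ => key c'), Finset.sum_comm]
  refine Finset.sum_congr rfl fun j _ => ?_
  rw [Finset.sum_eq_single (Quotient.mk r₂' j)]
  · simp [pim_mk]
  · intro c' _ hne
    rw [if_neg]
    rintro ⟨h1, _⟩
    exact hne h1.symm
  · intro habs
    exact absurd (Finset.mem_univ _) habs

lemma Pm_surjective {r' r : Setoid (Fin n)} (h : r' ≤ r) : Function.Surjective (Pm N h) := by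
  intro g
  classical
  refine ⟨fun c' => if c' = Function.surjInv (pim_surj h) (pim h c') then g (pim h c') else 0, ?_⟩
  funext c
  show (∑ c' : Quotient r', _) = g c
  rw [Finset.sum_eq_single (Function.surjInv (pim_surj h) c)]
  · simp [Function.surjInv_eq (pim_surj h) c]
  · intro c' _ hne
    by_cases hc : pim h c' = c
    · rw [if_pos hc]
      show (if c' = Function.surjInv (pim_surj h) (pim h c') then g (pim h c') else 0) = 0
      rw [if_neg (fun heq => hne (heq.trans (congrArg _ hc)))]
    · rw [if_neg hc]
  · intro habs
    exact absurd (Finset.mem_univ _) habs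

end homs

section count
variable (N : ℕ) [NeZero N]

lemma card_hom_eq {G H : Type*} [AddGroup G] [AddGroup H] [Finite G] (f : G →+ H) :
    Nat.card G = Nat.card f.ker * Nat.card f.range := by
  rw [AddSubgroup.card_eq_card_quotient_mul_card_addSubgroup f.ker,
    Nat.card_congr (QuotientAddGroup.quotientKerEquivRange f).toEquiv, mul_comm]

lemma count_ineq (k : ℕ) (r₁ : Setoid (Fin (2*k))) {r₂' r₂ : Setoid (Fin (2*k))}
    (h : r₂' ≤ r₂) :
    N ^ (Nat.card (Quotient r₂)) * Nat.card (psi N k r₁ r₂).ker ≤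
      N ^ (Nat.card (Quotient r₂')) * Nat.card (psi N k r₁ r₂').ker := by
  classical
  set K := (psi N k r₁ r₂).ker
  set K' := (psi N k r₁ r₂').ker
  have hKK' : K' ≤ K := by
    intro x hx
    rw [AddMonoidHom.mem_ker] at hx ⊢
    rw [← Pm_comp_psi N k r₁ h x, hx, map_zero]
  set ρ : K →+ (Quotient r₂' → ZMod N) := (psi N k r₁ r₂').comp K.subtype with hρ
  have h1 : Nat.card K = Nat.card ρ.ker * Nat.card ρ.range := card_hom_eq ρ
  have h2 : Nat.card ρ.ker = Nat.card K' := by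
    refine Nat.card_congr ⟨fun x => ⟨x.1.1, AddMonoidHom.mem_ker.mpr x.2⟩,
      fun y => ⟨⟨y.1, hKK' y.2⟩, AddMonoidHom.mem_ker.mpr (AddMonoidHom.mem_ker.mp y.2)⟩,
      fun x => by ext; rfl, fun y => by ext; rfl⟩
  have h3 : ρ.range ≤ (Pm N h).ker := by
    rintro y ⟨x, rfl⟩
    rw [AddMonoidHom.mem_ker]
    show Pm N h (psi N k r₁ r₂' x.1) = 0
    rw [Pm_comp_psi N k r₁ h]
    exact AddMonoidHom.mem_ker.mp x.2
  have h4 : Nat.card ρ.range ≤ Nat.card (Pm N h).ker := AddSubgroup.card_le_of_le h3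
  have h5 : Nat.card (Quotient r₂' → ZMod N) =
      Nat.card (Pm N h).ker * Nat.card (Pm N h).range := card_hom_eq _
  have h6 : Nat.card (Pm N h).range = N ^ (Nat.card (Quotient r₂)) := by
    rw [(AddMonoidHom.range_eq_top).mpr (Pm_surjective N h), AddSubgroup.card_top,
      Nat.card_fun, Nat.card_zmod]
  have h7 : Nat.card (Quotient r₂' → ZMod N) = N ^ (Nat.card (Quotient r₂')) := by
    rw [Nat.card_fun, Nat.card_zmod]
  calc N ^ (Nat.card (Quotient r₂)) * Nat.card K
      = Nat.card K' * (Nat.card ρ.range * N ^ (Nat.card (Quotient r₂))) := by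
        rw [h1, h2]; ring
    _ ≤ Nat.card K' * (Nat.card (Pm N h).ker * N ^ (Nat.card (Quotient r₂))) := by
        exact Nat.mul_le_mul_left _ (Nat.mul_le_mul_right _ h4)
    _ = Nat.card K' * Nat.card (Quotient r₂' → ZMod N) := by rw [h5, h6]
    _ = N ^ (Nat.card (Quotient r₂')) * Nat.card K' := by rw [h7, mul_comm]

end count




section main
variable (N : ℕ) [NeZero N]

lemma expSum_eq (k : ℕ) (r₁ r₂ : Setoid (Fin (2*k))) :
    expSum N k r₁ r₂ =
      ((N ^ (numBlocks r₂) * Nat.card (psi N k r₁ r₂).ker : ℕ) : ℂ) := by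
  classical
  have hw : Complex.exp (2 * Real.pi * Complex.I / (N:ℂ)) = w N := rfl
  rw [expSum]
  simp only [hw]
  rw [sum_Eset N r₁]
  have step1 : ∀ g₁ : Quotient r₁ → ZMod N,
      (∑ n ∈ Finset.univ.filter (· ∈ Eset N (2*k) r₂), w N ^ dotp N k (toE N r₁ g₁) n)
      = if psi N k r₁ r₂ g₁ = 0 then ((N:ℂ) ^ numBlocks r₂) else 0 := by
    intro g₁
    rw [sum_Eset N r₂]
    have e1 : ∀ g₂ : Quotient r₂ → ZMod N,
        w N ^ dotp N k (toE N r₁ g₁) (toE N r₂ g₂)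
        = ∏ c : Quotient r₂, ee N (psi N k r₁ r₂ g₁ c * g₂ c) := by
      intro g₂
      rw [w_zpow N]
      have hc : ((dotp N k (toE N r₁ g₁) (toE N r₂ g₂) : ℤ) : ZMod N)
          = ∑ j : Fin (2*k), ((epsz k j : ZMod N) * g₁ (Quotient.mk r₁ j)) * g₂ (Quotient.mk r₂ j) := by
        rw [dotp]
        push_cast
        refine Finset.sum_congr rfl fun j _ => ?_
        rw [← toE_cast N r₁ g₁ j, ← toE_cast N r₂ g₂ j, epsz]
        split_ifs <;> push_cast <;> ring
      rw [hc, ← Finset.sum_fiberwise Finset.univ (fun j => Quotient.mk r₂ j)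
        (fun j => ((epsz k j : ZMod N) * g₁ (Quotient.mk r₁ j)) * g₂ (Quotient.mk r₂ j))]
      rw [ee_sum]
      refine Finset.prod_congr rfl fun c _ => ?_
      have hpsi : psi N k r₁ r₂ g₁ c =
          ∑ j ∈ Finset.univ.filter (fun j => Quotient.mk r₂ j = c),
            (epsz k j : ZMod N) * g₁ (Quotient.mk r₁ j) := by
        show (∑ j : Fin (2*k), if Quotient.mk r₂ j = c
            then (epsz k j : ZMod N) * g₁ (Quotient.mk r₁ j) else 0) = _
        rw [Finset.sum_filter]
      congr 1
      rw [hpsi, Finset.sum_mul]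
      refine Finset.sum_congr rfl fun j hj => ?_
      rw [(Finset.mem_filter.mp hj).2]
    rw [Finset.sum_congr rfl (fun g₂ _ => e1 g₂)]
    rw [← Fintype.piFinset_univ,
      ← Finset.prod_univ_sum (fun _ => Finset.univ) (fun c y => ee N (psi N k r₁ r₂ g₁ c * y))]
    have e2 : ∀ c : Quotient r₂, (∑ y : ZMod N, ee N (psi N k r₁ r₂ g₁ c * y))
        = if psi N k r₁ r₂ g₁ c = 0 then (N:ℂ) else 0 := fun c => sum_ee N _
    rw [Finset.prod_congr rfl (fun c _ => e2 c)]
    by_cases hL : psi N k r₁ r₂ g₁ = 0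
    · rw [if_pos hL]
      rw [Finset.prod_congr rfl (fun c _ => by rw [if_pos (show psi N k r₁ r₂ g₁ c = 0 from by rw [hL]; rfl)] : ∀ c ∈ Finset.univ, _ = (N:ℂ)),
        Finset.prod_const, Finset.card_univ, numBlocks, Nat.card_eq_fintype_card]
    · rw [if_neg hL]
      obtain ⟨c, hc⟩ : ∃ c, psi N k r₁ r₂ g₁ c ≠ 0 := by
        by_contra hcon
        push_neg at hcon
        exact hL (funext fun c => (hcon c).trans rfl)
      exact Finset.prod_eq_zero (Finset.mem_univ c) (by rw [if_neg hc])
  rw [Finset.sum_congr rfl (fun g₁ _ => step1 g₁)]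
  rw [Finset.sum_ite, Finset.sum_const, Finset.sum_const_zero, add_zero, nsmul_eq_mul]
  have hcard : (Finset.univ.filter (fun g₁ : Quotient r₁ → ZMod N => psi N k r₁ r₂ g₁ = 0)).card
      = Nat.card (psi N k r₁ r₂).ker := by
    rw [Nat.card_congr (Equiv.subtypeEquivRight (fun x => (AddMonoidHom.mem_ker (f := psi N k r₁ r₂)).trans Iff.rfl))]
    rw [Nat.card_eq_fintype_card]
    simp [Fintype.card_subtype]
  rw [hcard]
  push_cast
  ring

end main

section matelt
variable (N : ℕ) [NeZero N]

lemma wzpow_sum {ι : Type*} (s : Finset ι) (f : ι → ℤ) :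
    w N ^ (∑ i ∈ s, f i) = ∏ i ∈ s, w N ^ f i := by
  classical
  induction s using Finset.induction_on with
  | empty => simp
  | insert _ _ h ih =>
    rw [Finset.sum_insert h, Finset.prod_insert h, zpow_add₀ (w_ne_zero N), ih]

lemma Fmat_eq (i j : Fin N) :
    Fmat N i j = (((Real.sqrt N)⁻¹ : ℝ) : ℂ) * w N ^ ((((i:ℕ)+1) * ((j:ℕ)+1) : ℕ)) := by
  rw [Fmat, w_pow_nat, Complex.ofReal_inv]
  congr 2
  push_cast
  ring

lemma Fmat_conj_eq (i j : Fin N) :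
    (starRingEnd ℂ) (Fmat N i j) =
      (((Real.sqrt N)⁻¹ : ℝ) : ℂ) * w N ^ (-((((i:ℕ)+1) * ((j:ℕ)+1) : ℕ) : ℤ)) := by
  rw [Fmat_eq, map_mul]
  congr 1
  · rw [Complex.conj_ofReal]
  · rw [w_pow_nat, ← Complex.exp_conj]
    rw [zpow_neg, zpow_natCast, w_pow_nat, ← Complex.exp_neg]
    congr 1
    have : ((((i:ℕ)+1) * ((j:ℕ)+1) : ℕ) : ℂ) = (((i:ℕ):ℂ)+1) * (((j:ℕ):ℂ)+1) := by push_cast; ring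
    simp [map_div₀, map_mul, Complex.conj_I, Complex.conj_ofReal, this, map_ofNat]
    ring

lemma Fkk_eq (k : ℕ) (a b : Fin (2*k) → Fin N) :
    Fkk N k a b = ((((Real.sqrt N)⁻¹ : ℝ)^(2*k) : ℝ) : ℂ) * w N ^ (dotp N k a b) := by
  rw [Fkk, dotp, wzpow_sum, Complex.ofReal_pow]
  rw [show ((((Real.sqrt N)⁻¹ : ℝ) : ℂ))^(2*k) = ∏ _j : Fin (2*k), (((Real.sqrt N)⁻¹ : ℝ) : ℂ) from by
    rw [Finset.prod_const, Finset.card_univ, Fintype.card_fin]]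
  rw [← Finset.prod_mul_distrib]
  refine Finset.prod_congr rfl fun j _ => ?_
  by_cases hj : (j:ℕ) < k
  · rw [if_pos hj, if_pos hj, Fmat_eq]
    congr 1
    rw [← zpow_natCast (w N)]
    congr 1
    push_cast
    ring
  · rw [if_neg hj, if_neg hj, Fmat_conj_eq]
    congr 1
    congr 1
    push_cast
    ring

lemma matEltE_eq (k : ℕ) (r₁ r₂ : Setoid (Fin (2*k))) :
    matEltE N k r₁ r₂ =
      (((Real.sqrt ((N:ℝ) ^ numBlocks r₁))⁻¹ * (Real.sqrt ((N:ℝ) ^ numBlocks r₂))⁻¹ *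
        ((Real.sqrt N)⁻¹ : ℝ)^(2*k) : ℝ) : ℂ) * expSum N k r₁ r₂ := by
  classical
  rw [matEltE]
  have hterm : ∀ a b : Fin (2*k) → Fin N,
      (starRingEnd ℂ) (ketE N (2*k) r₁ a) * Fkk N k a b * ketE N (2*k) r₂ b
      = if a ∈ Eset N (2*k) r₁ then (if b ∈ Eset N (2*k) r₂ then
          (((Real.sqrt ((N:ℝ) ^ numBlocks r₁))⁻¹ * (Real.sqrt ((N:ℝ) ^ numBlocks r₂))⁻¹ *
            ((Real.sqrt N)⁻¹ : ℝ)^(2*k) : ℝ) : ℂ) *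
          (Complex.exp (2 * Real.pi * Complex.I / N) ^ (dotp N k a b)) else 0) else 0 := by
    intro a b
    rw [ketE, ketE, Fkk_eq]
    split_ifs with h1 h2
    · push_cast
      rw [map_inv₀, Complex.conj_ofReal]
      show _ = _ * (w N ^ _)
      ring
    all_goals simp
  rw [Finset.sum_congr rfl fun a _ => Finset.sum_congr rfl fun b _ => hterm a b]
  rw [expSum, Finset.mul_sum, Finset.sum_filter]
  refine Finset.sum_congr rfl fun a _ => ?_
  by_cases h1 : a ∈ Eset N (2*k) r₁
  · rw [if_pos h1, Finset.mul_sum, Finset.sum_filter]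
    exact Finset.sum_congr rfl fun b _ => by rw [if_pos h1]
  · rw [if_neg h1]
    exact Finset.sum_eq_zero fun b _ => by rw [if_neg h1]

lemma sqrt_mul_matEltE (k : ℕ) (r₁ r₂ : Setoid (Fin (2*k))) :
    Real.sqrt ((N : ℝ) ^ numBlocks r₁ * (N : ℝ) ^ numBlocks r₂) * (matEltE N k r₁ r₂).re
      = (((N:ℝ))^k)⁻¹ * (expSum N k r₁ r₂).re := by
  have hN : (0:ℝ) < N := by exact_mod_cast (NeZero.pos N)
  rw [matEltE_eq]
  have hre : ∀ (r : ℝ) (z : ℂ), ((r : ℂ) * z).re = r * z.re := by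
    intro r z
    simp [Complex.mul_re]
  rw [hre, Real.sqrt_mul (by positivity)]
  have hinv : ((Real.sqrt N)⁻¹)^2 = (N:ℝ)⁻¹ := by
    rw [← Real.sqrt_inv]
    exact Real.sq_sqrt (by positivity)
  have hs : ((Real.sqrt N)⁻¹)^(2*k) = ((N:ℝ)^k)⁻¹ := by
    rw [pow_mul, hinv, inv_pow]
  have h1 : Real.sqrt ((N:ℝ)^numBlocks r₁) ≠ 0 := by positivity
  have h2 : Real.sqrt ((N:ℝ)^numBlocks r₂) ≠ 0 := by positivity
  rw [hs]
  rw [show ∀ S : ℝ, Real.sqrt ((N:ℝ)^numBlocks r₁) * Real.sqrt ((N:ℝ)^numBlocks r₂) *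
      ((Real.sqrt ((N:ℝ)^numBlocks r₁))⁻¹ * (Real.sqrt ((N:ℝ)^numBlocks r₂))⁻¹ * ((N:ℝ)^k)⁻¹ * S)
      = (Real.sqrt ((N:ℝ)^numBlocks r₁) * (Real.sqrt ((N:ℝ)^numBlocks r₁))⁻¹) *
        ((Real.sqrt ((N:ℝ)^numBlocks r₂) * (Real.sqrt ((N:ℝ)^numBlocks r₂))⁻¹)) * (((N:ℝ)^k)⁻¹ * S)
      from fun S => by ring,
    mul_inv_cancel₀ h1, mul_inv_cancel₀ h2, one_mul, one_mul]

end matelt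

section assemble
variable (N : ℕ) [NeZero N]

lemma expSum_symm (k : ℕ) (r₁ r₂ : Setoid (Fin (2*k))) :
    expSum N k r₁ r₂ = expSum N k r₂ r₁ := by
  rw [expSum, expSum, Finset.sum_comm]
  refine Finset.sum_congr rfl fun n _ => Finset.sum_congr rfl fun m _ => ?_
  congr 1
  rw [dotp, dotp]
  refine Finset.sum_congr rfl fun j _ => by ring

lemma expSum_mono (k : ℕ) (r₁ : Setoid (Fin (2*k))) {r₂' r₂ : Setoid (Fin (2*k))}
    (h : r₂' ≤ r₂) : (expSum N k r₁ r₂).re ≤ (expSum N k r₁ r₂').re := by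
  rw [expSum_eq, expSum_eq]
  rw [Complex.natCast_re, Complex.natCast_re]
  exact_mod_cast count_ineq N k r₁ h

end assemble
theorem stmt13 (N k : ℕ) (hN : 0 < N) (hk : 0 < k)
    (r₁ r₂ r₁' r₂' : Setoid (Fin (2*k))) (h₁ : r₁' ≤ r₁) (h₂ : r₂' ≤ r₂) :
    Real.sqrt ((N : ℝ) ^ numBlocks r₁ * (N : ℝ) ^ numBlocks r₂) *
        (matEltE N k r₁ r₂).re ≤
      Real.sqrt ((N : ℝ) ^ numBlocks r₁' * (N : ℝ) ^ numBlocks r₂') *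
        (matEltE N k r₁' r₂').re ∧
    (expSum N k r₁ r₂).re ≤ (expSum N k r₁' r₂').re := by
  have : NeZero N := ⟨hN.ne'⟩
  have h2' : (expSum N k r₁ r₂).re ≤ (expSum N k r₁' r₂').re := by
    calc (expSum N k r₁ r₂).re ≤ (expSum N k r₁ r₂').re := expSum_mono N k r₁ h₂
      _ = (expSum N k r₂' r₁).re := by rw [expSum_symm]
      _ ≤ (expSum N k r₂' r₁').re := expSum_mono N k r₂' h₁
      _ = (expSum N k r₁' r₂').re := by rw [expSum_symm]
  refine ⟨?_, h2'⟩
  rw [sqrt_mul_matEltE, sqrt_mul_matEltE]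
  exact mul_le_mul_of_nonneg_left h2' (by positivity)
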